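/- For every real x with 0 < x < π/2, the inequalities 8/(π² − 4x²) < (tan x)/x < π²/(π² − 4x²) hold. -/

import Mathlib

open Real Set

noncomputable def fbs (x : ℝ) : ℝ := (π^2 - 4*x^2) * Real.sin x - 8*x*Real.cos x
noncomputable def gbs (x : ℝ) : ℝ := π^2*x*Real.cos x - (π^2 - 4*x^2) * Real.sin x
noncomputable def hbs (x : ℝ) : ℝ := 4*x*Real.cos x - (π^2 - 8) * Real.sin x
noncomputable def hbs' (x : ℝ) : ℝ := (12 - π^2)*Real.cos x - 4*x*Real.sin x

lemma sq_deriv (x : ℝ) : HasDerivAt (fun x : ℝ => π^2 - 4*x^2) (-(8*x)) x := by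
  have := ((hasDerivAt_pow 2 x).const_mul (4:ℝ)).const_sub (π^2)
  refine this.congr_deriv ?_
  ring

lemma fbs_deriv (x : ℝ) : HasDerivAt fbs ((π^2 - 4*x^2 - 8) * Real.cos x) x := by
  have h1 := (sq_deriv x).mul (Real.hasDerivAt_sin x)
  have h2 := (((hasDerivAt_id x).const_mul (8:ℝ)).mul (Real.hasDerivAt_cos x))
  have := h1.sub h2
  refine this.congr_deriv ?_
  simp only [id_eq]
  ring

lemma gbs_deriv (x : ℝ) : HasDerivAt gbs (x * hbs x) x := by
  have h1 := (((hasDerivAt_id x).const_mul (π^2)).mul (Real.hasDerivAt_cos x))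
  have h2 := (sq_deriv x).mul (Real.hasDerivAt_sin x)
  have := h1.sub h2
  refine this.congr_deriv ?_
  simp [hbs]
  ring

lemma hbs_deriv (x : ℝ) : HasDerivAt hbs (hbs' x) x := by
  have h1 := (((hasDerivAt_id x).const_mul (4:ℝ)).mul (Real.hasDerivAt_cos x))
  have h2 := (Real.hasDerivAt_sin x).const_mul (π^2 - 8)
  have := h1.sub h2
  refine this.congr_deriv ?_
  simp [hbs']
  ring

lemma hbs'_deriv (x : ℝ) :
    HasDerivAt hbs' ((π^2 - 16) * Real.sin x - 4*x*Real.cos x) x := by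
  have h1 := (Real.hasDerivAt_cos x).const_mul (12 - π^2)
  have h2 := (((hasDerivAt_id x).const_mul (4:ℝ)).mul (Real.hasDerivAt_sin x))
  have := h1.sub h2
  refine this.congr_deriv ?_
  simp only [id_eq]
  ring

lemma pi_sq_gt_8 : (8:ℝ) < π^2 := by nlinarith [Real.pi_gt_d6]

lemma pi_sq_lt_16 : π^2 < 16 := by nlinarith [Real.pi_lt_d2, Real.pi_pos]

lemma fbs_cont : Continuous fbs := by unfold fbs; continuity
lemma gbs_cont : Continuous gbs := by unfold gbs; continuity
lemma hbs_cont : Continuous hbs := by unfold hbs; continuity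
lemma hbs'_cont : Continuous hbs' := by unfold hbs'; continuity

lemma fbs_zero : fbs 0 = 0 := by simp [fbs]

lemma fbs_pi_div_two : fbs (π/2) = 0 := by
  simp [fbs, Real.cos_pi_div_two, Real.sin_pi_div_two]
  ring

lemma gbs_zero : gbs 0 = 0 := by simp [gbs]

lemma gbs_pi_div_two : gbs (π/2) = 0 := by
  simp [gbs, Real.cos_pi_div_two, Real.sin_pi_div_two]
  ring

lemma cos_pos' {y : ℝ} (h0 : 0 ≤ y) (h1 : y < π/2) : 0 < Real.cos y :=
  Real.cos_pos_of_mem_Ioo ⟨by linarith [Real.pi_pos], h1⟩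

lemma fbs_pos {x : ℝ} (h0 : 0 < x) (h1 : x < π/2) : 0 < fbs x := by
  set c := Real.sqrt (π^2 - 8) / 2 with hc
  have h8 := pi_sq_gt_8
  have hcpos : 0 < c := by
    have : 0 < Real.sqrt (π^2 - 8) := Real.sqrt_pos.mpr (by linarith)
    positivity
  have hsq : Real.sqrt (π^2 - 8) ^ 2 = π^2 - 8 := Real.sq_sqrt (by linarith)
  have hclt : c < π/2 := by
    have h1 : Real.sqrt (π^2 - 8) < π := by
      have := Real.sqrt_lt_sqrt (by linarith : (0:ℝ) ≤ π^2 - 8) (by linarith : π^2 - 8 < π^2)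
      rwa [Real.sqrt_sq Real.pi_pos.le] at this
    rw [hc]; linarith
  have mono : StrictMonoOn fbs (Icc 0 c) := by
    apply strictMonoOn_of_deriv_pos (convex_Icc 0 c) fbs_cont.continuousOn
    intro y hy
    rw [interior_Icc] at hy
    rw [(fbs_deriv y).deriv]
    have hy4 : 4 * y^2 < π^2 - 8 := by
      have : 2 * y < Real.sqrt (π^2 - 8) := by
        have := hy.2; rw [hc] at this; linarith
      nlinarith [hy.1]
    have := cos_pos' hy.1.le (lt_trans hy.2 hclt)
    nlinarith
  have anti : StrictAntiOn fbs (Icc c (π/2)) := by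
    apply strictAntiOn_of_deriv_neg (convex_Icc c (π/2)) fbs_cont.continuousOn
    intro y hy
    rw [interior_Icc] at hy
    rw [(fbs_deriv y).deriv]
    have hy4 : π^2 - 8 < 4 * y^2 := by
      have : Real.sqrt (π^2 - 8) < 2 * y := by
        have := hy.1; rw [hc] at this; linarith
      nlinarith [Real.sqrt_nonneg (π^2 - 8)]
    have := cos_pos' (le_trans hcpos.le hy.1.le) hy.2
    nlinarith
  rcases le_or_gt x c with hx | hx
  · have := mono (left_mem_Icc.mpr (by linarith)) ⟨h0.le, hx⟩ h0
    rwa [fbs_zero] at this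
  · have := anti ⟨hx.le, h1.le⟩ (right_mem_Icc.mpr (by linarith)) h1
    rwa [fbs_pi_div_two] at this

lemma hbs'_anti : StrictAntiOn hbs' (Icc 0 (π/2)) := by
  apply strictAntiOn_of_deriv_neg (convex_Icc 0 (π/2)) hbs'_cont.continuousOn
  intro y hy
  rw [interior_Icc] at hy
  rw [(hbs'_deriv y).deriv]
  have hs : 0 < Real.sin y := Real.sin_pos_of_pos_of_lt_pi hy.1 (by linarith [Real.pi_pos, hy.2])
  have hcos := cos_pos' hy.1.le hy.2
  nlinarith [pi_sq_lt_16, hy.1]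

lemma gbs_pos {x : ℝ} (h0 : 0 < x) (h1 : x < π/2) : 0 < gbs x := by
  by_cases hc : ∀ t ∈ Ioo 0 x, 0 < hbs t
  · have mono : StrictMonoOn gbs (Icc 0 x) := by
      apply strictMonoOn_of_deriv_pos (convex_Icc 0 x) gbs_cont.continuousOn
      intro y hy
      rw [interior_Icc] at hy
      rw [(gbs_deriv y).deriv]
      exact mul_pos hy.1 (hc y hy)
    have := mono (left_mem_Icc.mpr h0.le) (right_mem_Icc.mpr h0.le) h0
    rwa [gbs_zero] at this
  · push_neg at hc
    obtain ⟨t, ht, htle⟩ := hc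
    -- MVT on [0, t] gives ξ with hbs' ξ = hbs t / t ≤ 0
    obtain ⟨ξ, hξ, hξeq⟩ := exists_hasDerivAt_eq_slope hbs hbs' ht.1
      hbs_cont.continuousOn (fun y _ => hbs_deriv y)
    have hξle : hbs' ξ ≤ 0 := by
      rw [hξeq]
      have : hbs 0 = 0 := by simp [hbs]
      rw [this]
      apply div_nonpos_of_nonpos_of_nonneg
      · simpa using htle
      · linarith [ht.1]
    -- hbs is strictly decreasing on [ξ, π/2]
    have hanti : StrictAntiOn hbs (Icc ξ (π/2)) := by
      apply strictAntiOn_of_deriv_neg (convex_Icc ξ (π/2)) hbs_cont.continuousOn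
      intro y hy
      rw [interior_Icc] at hy
      rw [(hbs_deriv y).deriv]
      have : hbs' y < hbs' ξ := hbs'_anti ⟨hξ.1.le, by linarith [hξ.2, ht.2, h1]⟩
        ⟨by linarith [hξ.1, hy.1], hy.2.le⟩ hy.1
      linarith
    -- gbs strictly decreasing on [x, π/2]
    have ganti : StrictAntiOn gbs (Icc x (π/2)) := by
      apply strictAntiOn_of_deriv_neg (convex_Icc x (π/2)) gbs_cont.continuousOn
      intro y hy
      rw [interior_Icc] at hy
      rw [(gbs_deriv y).deriv]
      have hyb : hbs y < hbs t := hanti ⟨hξ.2.le, by linarith [ht.2, hy.1]⟩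
        ⟨by linarith [hξ.2, ht.2, hy.1], hy.2.le⟩ (by linarith [ht.2, hy.1])
      have : hbs y < 0 := lt_of_lt_of_le hyb htle
      have hypos : 0 < y := by linarith [ht.1, ht.2, hy.1]
      exact mul_neg_of_pos_of_neg hypos this
    have := ganti (left_mem_Icc.mpr h1.le) (right_mem_Icc.mpr h1.le) h1
    rwa [gbs_pi_div_two] at this

theorem becker_stark (x : ℝ) (h0 : 0 < x) (h1 : x < π / 2) :
    8 / (π ^ 2 - 4 * x ^ 2) < Real.tan x / x ∧
    Real.tan x / x < π ^ 2 / (π ^ 2 - 4 * x ^ 2) := by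
  have hd : 0 < π ^ 2 - 4 * x ^ 2 := by nlinarith [Real.pi_pos]
  have hcos : 0 < Real.cos x := cos_pos' h0.le h1
  have hf := fbs_pos h0 h1
  have hg := gbs_pos h0 h1
  unfold fbs at hf
  unfold gbs at hg
  constructor
  · rw [div_lt_div_iff₀ hd h0, Real.tan_eq_sin_div_cos, div_mul_eq_mul_div,
      lt_div_iff₀ hcos]
    nlinarith
  · rw [div_lt_div_iff₀ h0 hd, Real.tan_eq_sin_div_cos, div_mul_eq_mul_div,
      div_lt_iff₀ hcos]
    nlinarith
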